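/- Maximum energy of the environment in the finite Landauer-erasure protocol (Proposition, scaled by β): Let d ≥ 2 and T ≥ 2 be integers, ε ∈ (0, 1/2], and let ρ be a density matrix on ℂ^d. Let ρ'_ε be the target erasure state and ρ_t (t = 1,…,T) the straight-line erasure path from ρ to ρ'_ε, and for each t let λ_min(ρ_t) denote the smallest eigenvalue of ρ_t. Then Σ_{t=1}^{T} ln(1/λ_min(ρ_t)) ≤ T·(ln((d−1)/ε) + 1) − (ln(2πT))/2 − 1/(12T+1). -/

import Mathlib

open Matrix BigOperators
open scoped ComplexOrder

/-- The matrix unit `|e₀⟩⟨e₀|` in the `(0,0)` entry. -/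
noncomputable def E00 (d : ℕ) : Matrix (Fin d) (Fin d) ℂ :=
  Matrix.of fun i j => if (i : ℕ) = 0 ∧ (j : ℕ) = 0 then 1 else 0

/-- The target erasure state `ρ'_ε = (1-ε)·E₀₀ + (ε/(d-1))·(I - E₀₀)`. -/
noncomputable def targetState (d : ℕ) (ε : ℝ) : Matrix (Fin d) (Fin d) ℂ :=
  (1 - ε : ℝ) • E00 d + (ε / ((d : ℝ) - 1)) • (1 - E00 d)

/-- The matrix logarithm of a Hermitian matrix, via its spectral decomposition
(continuous functional calculus applied to `Real.log`); junk value `0` otherwise. -/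
noncomputable def matLog {d : ℕ} (A : Matrix (Fin d) (Fin d) ℂ) :
    Matrix (Fin d) (Fin d) ℂ :=
  if hA : A.IsHermitian then hA.cfc Real.log else 0

/-- The von Neumann entropy `S(ρ) = ∑ᵢ (-λᵢ ln λᵢ)` of a Hermitian matrix. -/
noncomputable def vnEntropy {d : ℕ} (ρ : Matrix (Fin d) (Fin d) ℂ) : ℝ :=
  if hρ : ρ.IsHermitian then ∑ i, Real.negMulLog (hρ.eigenvalues i) else 0

/-- The straight-line erasure path `ρ_t = ρ + (t/T)·(ρ'_ε - ρ)`. -/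
noncomputable def erasurePath {d : ℕ} (ρ : Matrix (Fin d) (Fin d) ℂ) (ε : ℝ)
    (T t : ℕ) : Matrix (Fin d) (Fin d) ℂ :=
  ρ + ((t : ℝ) / (T : ℝ)) • (targetState d ε - ρ)

/-- The dimensionless protocol heat
`βQ = ∑_{t=1}^T Re tr[(ρ_t - ρ_{t-1})·log ρ_t]`. -/
noncomputable def protocolHeat {d : ℕ} (ρ : Matrix (Fin d) (Fin d) ℂ) (ε : ℝ)
    (T : ℕ) : ℝ :=
  ∑ t ∈ Finset.Icc 1 T,
    ((erasurePath ρ ε T t - erasurePath ρ ε T (t - 1)) *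
      matLog (erasurePath ρ ε T t)).trace.re

/-- The smallest eigenvalue of a Hermitian matrix (junk value `0` otherwise). -/
noncomputable def minEig {d : ℕ} (A : Matrix (Fin d) (Fin d) ℂ) : ℝ :=
  if hA : A.IsHermitian then ⨅ i, hA.eigenvalues i else 0


open Finset Filter Topology Real
set_option maxHeartbeats 1000000

-- Robbins lemma
lemma robbins (n : ℕ) (hn : 1 ≤ n) :
    Real.log (Real.sqrt π) + 1 / (12 * (n:ℝ) + 1) ≤ Real.log (Stirling.stirlingSeq n) := by
  set b : ℕ → ℝ := fun k => Real.log (Stirling.stirlingSeq (k+1)) - 1/(12*((k:ℝ)+1)+1) with hb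
  have hanti : Antitone b := by
    apply antitone_nat_of_succ_le
    intro k
    have hsum := Stirling.log_stirlingSeq_diff_hasSum k
    have hfirst := le_hasSum hsum 0 (fun j _ => by positivity)
    simp only [b]
    set x := (k:ℝ) with hx
    have hx0 : 0 ≤ x := Nat.cast_nonneg k
    have h0 : (1:ℝ) / (2 * ((0:ℕ)+1 : ℕ) + 1) * ((1 / (2 * ((k+1:ℕ)) + 1)) ^ 2) ^ ((0:ℕ)+1)
        = 1/3 * (1/(2*x+3))^2 := by push_cast; ring
    rw [h0] at hfirst
    have hineq : 1/(12*(x+1)+1) - 1/(12*(x+1+1)+1) ≤ 1/3 * (1/(2*x+3))^2 := by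
      have hrw : 1/3 * (1/(2*x+3))^2 = 1/(3*(2*x+3)^2) := by
        field_simp
      rw [hrw, div_sub_div _ _ (by positivity : (12*(x+1)+1:ℝ) ≠ 0) (by positivity : (12*(x+1+1)+1:ℝ) ≠ 0),
        div_le_div_iff₀ (by positivity) (by positivity)]
      nlinarith [sq_nonneg x]
    push_cast at hfirst
    push_cast
    linarith
  have hlim : Tendsto b atTop (𝓝 (Real.log (Real.sqrt π))) := by
    have h1 : Tendsto (fun k : ℕ => Real.log (Stirling.stirlingSeq (k+1))) atTop
        (𝓝 (Real.log (Real.sqrt π))) := by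
      exact (Stirling.tendsto_stirlingSeq_sqrt_pi.comp (tendsto_add_atTop_nat 1)).log
        (by positivity)
    have h2 : Tendsto (fun k : ℕ => 1/(12*((k:ℝ)+1)+1)) atTop (𝓝 0) := by
      simp only [one_div]
      apply Tendsto.inv_tendsto_atTop
      apply tendsto_atTop_add_const_right
      exact (tendsto_natCast_atTop_atTop.atTop_add tendsto_const_nhds).const_mul_atTop (by norm_num)
    have := h1.sub h2
    rw [sub_zero] at this
    simp only [b]
    exact this
  have := hanti.le_of_tendsto hlim (n - 1)
  simp only [b] at this
  rw [Nat.sub_add_cancel hn] at this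
  have hc : ((n-1:ℕ):ℝ) + 1 = (n:ℝ) := by
    have := Nat.cast_sub hn (R := ℝ); push_cast at this ⊢; linarith [this]
  rw [hc] at this
  linarith

lemma log_factorial_ge (n : ℕ) (hn : 1 ≤ n) :
    (n:ℝ) * Real.log n - n + Real.log (2 * π * n) / 2 + 1 / (12 * (n:ℝ) + 1)
      ≤ Real.log (n.factorial : ℝ) := by
  have hn0 : (0:ℝ) < n := by exact_mod_cast hn
  have hf := Stirling.log_stirlingSeq_formula n
  have hr := robbins n hn
  have h1 : Real.log ((n:ℝ) / Real.exp 1) = Real.log n - 1 := by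
    rw [Real.log_div hn0.ne' (Real.exp_pos 1).ne', Real.log_exp]
  have h2 : Real.log (2 * (n:ℝ)) = Real.log 2 + Real.log n :=
    Real.log_mul (by norm_num) hn0.ne'
  have h3 : Real.log (2 * π * (n:ℝ)) = Real.log 2 + Real.log π + Real.log n := by
    rw [Real.log_mul (by positivity) hn0.ne', Real.log_mul (by norm_num) pi_pos.ne']
  have h4 : Real.log (Real.sqrt π) = Real.log π / 2 := Real.log_sqrt pi_pos.le
  rw [h1, h2] at hf
  rw [h4] at hr
  rw [h3]
  nlinarith [hf, hr]
section MatrixLemmas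
variable {n : ℕ}

lemma real_smul_complex_matrix (r : ℝ) (A : Matrix (Fin n) (Fin n) ℂ) :
    r • A = (r : ℂ) • A := by
  ext i j
  simp [Matrix.smul_apply, Complex.real_smul]

lemma psd_real_smul {A : Matrix (Fin n) (Fin n) ℂ} (hA : A.PosSemidef) {r : ℝ}
    (hr : 0 ≤ r) : (r • A).PosSemidef := by
  rw [real_smul_complex_matrix]
  refine Matrix.PosSemidef.of_dotProduct_mulVec_nonneg ?_ (fun x => ?_)
  · unfold Matrix.IsHermitian
    rw [Matrix.conjTranspose_smul, hA.1.eq]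
    congr 1
    simp [Complex.ext_iff]
  · rw [Matrix.smul_mulVec, dotProduct_smul, smul_eq_mul]
    exact mul_nonneg (by exact_mod_cast hr) (hA.dotProduct_mulVec_nonneg x)

lemma E00_posSemidef (d : ℕ) [NeZero d] : (E00 d).PosSemidef := by
  have hiff : ∀ i : Fin d, ((i : ℕ) = 0) ↔ (i = 0) := fun i =>
    ⟨fun h => Fin.ext (by simpa using h), fun h => by subst h; simp⟩
  refine Matrix.PosSemidef.of_dotProduct_mulVec_nonneg ?_ (fun x => ?_)
  · ext i j
    simp only [Matrix.conjTranspose_apply, E00, Matrix.of_apply]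
    split_ifs with h1 h2 h2 <;> simp_all [and_comm]
  · have hmv : ∀ i : Fin d, (E00 d *ᵥ x) i = if i = 0 then x 0 else 0 := by
      intro i
      simp only [Matrix.mulVec, dotProduct, E00, Matrix.of_apply, hiff, ite_mul, one_mul,
        zero_mul]
      by_cases h : i = 0 <;> simp [h]
    simp only [dotProduct, hmv, Pi.star_apply, mul_ite, mul_zero]
    rw [Finset.sum_ite_eq' Finset.univ (0 : Fin d) (fun i => star (x i) * x 0)]
    simp only [Finset.mem_univ, if_true]
    exact star_mul_self_nonneg _

lemma eig_ge {A : Matrix (Fin n) (Fin n) ℂ} (hA : A.IsHermitian) {μ : ℝ}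
    (h : (A - (μ : ℂ) • 1).PosSemidef) (i : Fin n) : μ ≤ hA.eigenvalues i := by
  have h2 := h.re_dotProduct_nonneg ⇑(hA.eigenvectorBasis i)
  have hvv : star (⇑(hA.eigenvectorBasis i)) ⬝ᵥ ⇑(hA.eigenvectorBasis i) = 1 := by
    rw [dotProduct_comm, ← EuclideanSpace.inner_eq_star_dotProduct]
    simp only [inner_self_eq_norm_sq_to_K,
      hA.eigenvectorBasis.orthonormal.1 i]
    norm_num
  rw [Matrix.sub_mulVec, dotProduct_sub, Matrix.smul_mulVec, Matrix.one_mulVec,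
    dotProduct_smul, hvv] at h2
  rw [map_sub] at h2
  have h3 := hA.eigenvalues_eq i
  simp only [smul_eq_mul, mul_one, RCLike.ofReal_re, Complex.ofReal_re] at h2
  have h4 : RCLike.re ((μ : ℂ)) = μ := by
    simp [RCLike.re_to_complex]
  rw [← h3, h4] at h2
  linarith

lemma herm_real_smul {A : Matrix (Fin n) (Fin n) ℂ} (hA : A.IsHermitian) (r : ℝ) :
    (r • A).IsHermitian := by
  rw [real_smul_complex_matrix]
  unfold Matrix.IsHermitian
  rw [Matrix.conjTranspose_smul, hA.eq]
  congr 1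
  simp [Complex.ext_iff]

lemma path_sub_smul_one (d T t : ℕ) (ε : ℝ) (ρ : Matrix (Fin d) (Fin d) ℂ) :
    erasurePath ρ ε T t - (((((t:ℝ)/T) * (ε/((d:ℝ)-1)) : ℝ)) : ℂ) • 1 =
      (1 - (t:ℝ)/T) • ρ + (((t:ℝ)/T) * (1 - ε - ε/((d:ℝ)-1))) • E00 d := by
  ext i j
  simp only [erasurePath, targetState, E00, Matrix.sub_apply, Matrix.add_apply,
    Matrix.smul_apply, Matrix.one_apply, Matrix.of_apply, smul_eq_mul, Complex.real_smul]
  split_ifs <;> push_cast <;> ring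

lemma path_isHermitian (d T t : ℕ) (ε : ℝ) {ρ : Matrix (Fin d) (Fin d) ℂ}
    [NeZero d] (hρ : ρ.IsHermitian) : (erasurePath ρ ε T t).IsHermitian := by
  have hE : (E00 d).IsHermitian := (E00_posSemidef d).1
  have htgt : (targetState d ε).IsHermitian :=
    (herm_real_smul hE _).add (herm_real_smul (Matrix.isHermitian_one.sub hE) _)
  exact hρ.add (herm_real_smul (htgt.sub hρ) _)

lemma minEig_path_ge (d T t : ℕ) (hd : 2 ≤ d) (hT : 1 ≤ T) (ht2 : t ≤ T)
    (ε : ℝ) (hε1 : 0 < ε) (hε2 : ε ≤ 1/2) {ρ : Matrix (Fin d) (Fin d) ℂ}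
    (hρ : ρ.PosSemidef) :
    ((t:ℝ)/T) * (ε/((d:ℝ)-1)) ≤ minEig (erasurePath ρ ε T t) := by
  haveI : NeZero d := ⟨by omega⟩
  have hT0 : (0:ℝ) < T := by exact_mod_cast Nat.lt_of_lt_of_le Nat.zero_lt_one hT
  have hd1 : (1:ℝ) ≤ (d:ℝ) - 1 := by
    have : (2:ℝ) ≤ d := by exact_mod_cast hd
    linarith
  have hherm : (erasurePath ρ ε T t).IsHermitian := path_isHermitian d T t ε hρ.1
  have h1 : (0:ℝ) ≤ 1 - (t:ℝ)/T := by
    rw [sub_nonneg, div_le_one hT0]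
    exact_mod_cast ht2
  have hfrac : ε / ((d:ℝ)-1) ≤ ε := by
    rw [div_le_iff₀ (by linarith)]
    nlinarith
  have h2 : (0:ℝ) ≤ ((t:ℝ)/T) * (1 - ε - ε/((d:ℝ)-1)) := by
    apply mul_nonneg (by positivity)
    have : (0:ℝ) < ε / ((d:ℝ)-1) := by positivity
    linarith
  have hpsd : (erasurePath ρ ε T t -
      (((((t:ℝ)/T) * (ε/((d:ℝ)-1)) : ℝ)) : ℂ) • 1).PosSemidef := by
    rw [path_sub_smul_one]
    exact (psd_real_smul hρ h1).add (psd_real_smul (E00_posSemidef d) h2)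
  rw [minEig, dif_pos hherm]
  exact le_ciInf (fun i => eig_ge hherm hpsd i)
lemma sum_log_Icc (T : ℕ) : ∑ t ∈ Finset.Icc 1 T, Real.log (t:ℝ)
    = Real.log (T.factorial : ℝ) := by
  rw [← Real.log_prod (fun t ht => by
    have := (Finset.mem_Icc.mp ht).1
    have : (0:ℝ) < t := by exact_mod_cast this
    exact this.ne')]
  congr 1
  rw [← Nat.cast_prod]
  congr 1
  rw [← Finset.Ico_add_one_right_eq_Icc]
  exact Finset.prod_Ico_id_eq_factorial T

open Real in
/-- **Maximum energy of the environment in the finite Landauer-erasure protocol**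
(Proposition, scaled by `β`): the sum `∑_{t=1}^T ln(1/λ_min(ρ_t))` is bounded by
`T·(ln((d-1)/ε) + 1) - ln(2πT)/2 - 1/(12T+1)`. -/
theorem max_erasure_energy
    (d : ℕ) (hd : 2 ≤ d) (T : ℕ) (hT : 2 ≤ T) (ε : ℝ)
    (hε : ε ∈ Set.Ioc (0 : ℝ) (1 / 2))
    (ρ : Matrix (Fin d) (Fin d) ℂ) (hρ : ρ.PosSemidef) (htr : ρ.trace = 1) :
    ∑ t ∈ Finset.Icc 1 T, Real.log (1 / minEig (erasurePath ρ ε T t)) ≤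
      (T : ℝ) * (Real.log (((d : ℝ) - 1) / ε) + 1) -
        Real.log (2 * π * (T : ℝ)) / 2 - 1 / (12 * (T : ℝ) + 1) := by
  obtain ⟨hε1, hε2⟩ := hε
  have hT0 : (0:ℝ) < T := by exact_mod_cast (by omega : 0 < T)
  have hd1 : (1:ℝ) ≤ (d:ℝ) - 1 := by
    have h2d : (2:ℝ) ≤ (d:ℝ) := by exact_mod_cast hd
    linarith
  have hstep : ∀ t ∈ Finset.Icc 1 T, Real.log (1 / minEig (erasurePath ρ ε T t)) ≤
      Real.log (((d:ℝ)-1)/ε) + Real.log T - Real.log t := by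
    intro t ht
    obtain ⟨ht1, ht2⟩ := Finset.mem_Icc.mp ht
    have htp : (0:ℝ) < (t:ℝ) := by exact_mod_cast ht1
    have hc : (0:ℝ) < ((t:ℝ)/T) * (ε/((d:ℝ)-1)) := by positivity
    have hle := minEig_path_ge d T t hd (by omega) ht2 ε hε1 hε2 hρ
    have hm : 0 < minEig (erasurePath ρ ε T t) := lt_of_lt_of_le hc hle
    have hlog := Real.log_le_log hc hle
    have hlogc : Real.log (((t:ℝ)/T) * (ε/((d:ℝ)-1)))
        = Real.log t - Real.log T + (Real.log ε - Real.log ((d:ℝ)-1)) := by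
      rw [Real.log_mul (by positivity) (by positivity),
        Real.log_div htp.ne' hT0.ne',
        Real.log_div hε1.ne' (by linarith : ((d:ℝ)-1) ≠ 0)]
    have hlogD : Real.log (((d:ℝ)-1)/ε) = Real.log ((d:ℝ)-1) - Real.log ε :=
      Real.log_div (by linarith) hε1.ne'
    rw [one_div, Real.log_inv, hlogD]
    rw [hlogc] at hlog
    linarith
  refine le_trans (Finset.sum_le_sum hstep) ?_
  have hcard : (Finset.Icc 1 T).card = T := by rw [Nat.card_Icc]; omega
  rw [Finset.sum_sub_distrib, Finset.sum_const, hcard, sum_log_Icc, nsmul_eq_mul]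
  have hlf := log_factorial_ge T (by omega)
  nlinarith [hlf]
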